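/- Let V be a finite nonempty index set and T ∈ (0, ∞]. Let f : V × [0,T) → ℝ be such that t ↦ f_i(t) is differentiable for each i ∈ V, let a_{ij} : [0,T) → ℝ (for i, j ∈ V) be continuous functions with a_{ij}(t) ≥ 0 for all i, j, t, and for each i ∈ V let Φ_i : ℝ → ℝ be locally Lipschitz with Φ_i(0) = 0. (1) If d/dt f_i(t) ≥ Σ_{j∈V} a_{ij}(t)(f_j(t) − f_i(t)) + Φ_i(f_i(t)) for all i, t and f_i(0) ≥ 0 for all i, then f_i(t) ≥ 0 for all i ∈ V and t ∈ [0,T). (2) If d/dt f_i(t) ≤ Σ_{j∈V} a_{ij}(t)(f_j(t) − f_i(t)) + Φ_i(f_i(t)) for all i, t and f_i(0) ≤ 0 for all i, then f_i(t) ≤ 0 for all i ∈ V and t ∈ [0,T). -/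
import Mathlib


open Filter Set

open Topology

lemma linBound {Φ : ℝ → ℝ} (hΦ : LocallyLipschitz Φ) (hΦ0 : Φ 0 = 0) (M : ℝ) :
    ∃ L : ℝ, 0 ≤ L ∧ ∀ y : ℝ, |y| ≤ M → |Φ y| ≤ L * |y| := by
  obtain ⟨K, t, ht, hlip⟩ := hΦ 0
  obtain ⟨ε, hε, hball⟩ := Metric.mem_nhds_iff.1 ht
  have hc : ContinuousOn (fun y => |Φ y|) (Icc (-M) M) := (hΦ.continuous.abs).continuousOn
  obtain ⟨C, hC⟩ := (isCompact_Icc (a := -M) (b := M)).exists_bound_of_continuousOn hc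
  refine ⟨(K : ℝ) + (max C 0) / (ε/2), by positivity, ?_⟩
  intro y hy
  rcases lt_or_ge (|y|) (ε/2) with h | h
  · have hyt : y ∈ t := hball (by simp only [Metric.mem_ball, Real.dist_eq, sub_zero]; linarith)
    have h0t : (0:ℝ) ∈ t := hball (by simp [Metric.mem_ball, hε])
    have hd := hlip.dist_le_mul y hyt 0 h0t
    rw [hΦ0] at hd
    rw [Real.dist_eq, Real.dist_eq, sub_zero, sub_zero] at hd
    have h1 : (0:ℝ) ≤ (max C 0) / (ε/2) := by positivity
    nlinarith [abs_nonneg y]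
  · have hyI : y ∈ Icc (-M) M := abs_le.mp hy
    have h2 : |Φ y| ≤ max C 0 := by
      have := hC y hyI
      simp only [Real.norm_eq_abs, abs_abs] at this
      exact this.trans (le_max_left _ _)
    have h3 : max C 0 = (max C 0) / (ε/2) * (ε/2) := by field_simp
    have h4 : (max C 0) / (ε/2) * (ε/2) ≤ (max C 0) / (ε/2) * |y| := by
      apply mul_le_mul_of_nonneg_left h (by positivity)
    nlinarith [abs_nonneg y, K.coe_nonneg]

lemma contOnSup' {ι : Type*} {s : Finset ι} (H : s.Nonempty) {g : ι → ℝ → ℝ} {U : Set ℝ}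
    (hg : ∀ i ∈ s, ContinuousOn (g i) U) :
    ContinuousOn (fun x => s.sup' H fun i => g i x) U := by
  induction H using Finset.Nonempty.cons_induction with
  | singleton i => simpa using hg i (by simp)
  | cons i s his hs ih =>
      have : (fun x => (Finset.cons i s his).sup' (Finset.cons_nonempty his) fun j => g j x)
          = fun x => max (g i x) (s.sup' hs fun j => g j x) := by
        funext x; rw [Finset.sup'_cons (H := hs)]
      rw [this]
      exact (hg i (by simp)).sup (ih fun j hj => hg j (by simp [hj]))

lemma key {V : Type*} [Fintype V] [Nonempty V]
    (S : Set ℝ) (f f' : V → ℝ → ℝ) (a : V → V → ℝ → ℝ) (Φ : V → ℝ → ℝ)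
    (hderiv : ∀ i, ∀ t ∈ S, HasDerivWithinAt (f i) (f' i t) S t)
    (hanonneg : ∀ i j, ∀ t ∈ S, 0 ≤ a i j t)
    (hΦ : ∀ i, LocallyLipschitz (Φ i))
    (hΦ0 : ∀ i, Φ i 0 = 0)
    (hineq : ∀ i, ∀ t ∈ S, f' i t ≤ (∑ j, a i j t * (f j t - f i t)) + Φ i (f i t))
    (hinit : ∀ i, f i 0 ≤ 0)
    (t0 : ℝ) (ht0 : 0 < t0) (hsub : Icc 0 t0 ⊆ S) :
    ∀ i, ∀ t ∈ Icc 0 t0, f i t ≤ 0 := by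
  classical
  have une : (Finset.univ : Finset V).Nonempty := Finset.univ_nonempty
  have hfc : ∀ i, ContinuousOn (f i) (Icc 0 t0) := fun i t ht =>
    ((hderiv i t (hsub ht)).continuousWithinAt).mono hsub
  have hMex : ∀ i, ∃ C, ∀ t ∈ Icc 0 t0, |f i t| ≤ C := by
    intro i
    obtain ⟨C, hC⟩ := isCompact_Icc.exists_bound_of_continuousOn (hfc i)
    exact ⟨C, fun t ht => by simpa [Real.norm_eq_abs] using hC t ht⟩
  choose Mv hMv using hMex
  set M : ℝ := Finset.univ.sup' une Mv with hM
  have hMle : ∀ i, ∀ t ∈ Icc 0 t0, |f i t| ≤ M := fun i t ht =>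
    (hMv i t ht).trans (Finset.le_sup' Mv (Finset.mem_univ i))
  have hLex : ∀ i, ∃ L : ℝ, 0 ≤ L ∧ ∀ y : ℝ, |y| ≤ M → |Φ i y| ≤ L * |y| :=
    fun i => linBound (hΦ i) (hΦ0 i) M
  choose Lv hLv0 hLv using hLex
  set L : ℝ := Finset.univ.sup' une Lv with hL
  have hLnn : 0 ≤ L := (hLv0 (Classical.arbitrary V)).trans
    (Finset.le_sup' Lv (Finset.mem_univ _))
  have hLle : ∀ i, Lv i ≤ L := fun i => Finset.le_sup' Lv (Finset.mem_univ i)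
  set K : ℝ := L + 1 with hK
  set F : ℝ → ℝ := fun x => Finset.univ.sup' une fun i => f i x with hF
  set h : ℝ → ℝ := fun x => max (F x) 0 with hh
  have hFc : ContinuousOn F (Icc 0 t0) := contOnSup' une fun i _ => hfc i
  have hhc : ContinuousOn h (Icc 0 t0) := hFc.sup continuousOn_const
  have hfleF : ∀ i x, f i x ≤ F x := fun i x => Finset.le_sup' (fun j => f j x) (Finset.mem_univ i)
  have hA : ∀ x : ℝ, (Finset.univ.filter fun i => f i x = F x).Nonempty := by
    intro x
    obtain ⟨i, _, hi⟩ := Finset.exists_mem_eq_sup' une fun i => f i x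
    exact ⟨i, Finset.mem_filter.2 ⟨Finset.mem_univ i, hi.symm⟩⟩
  set h' : ℝ → ℝ := fun x =>
    max ((Finset.univ.filter fun i => f i x = F x).sup' (hA x) fun i => f' i x) 0 with hh'
  have hmemS : ∀ x ∈ Ico 0 t0, Ioc x t0 ⊆ S := fun x hx t ht =>
    hsub ⟨hx.1.trans ht.1.le, ht.2⟩
  have hIocmem : ∀ x ∈ Ico 0 t0, Ioc x t0 ∈ 𝓝[>] x := fun x hx =>
    Ioc_mem_nhdsGT_of_mem ⟨le_rfl, hx.2⟩
  have htendf : ∀ i, ∀ x ∈ Ico 0 t0, Tendsto (f i) (𝓝[>] x) (𝓝 (f i x)) := by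
    intro i x hx
    have hxS : x ∈ S := hsub ⟨hx.1, hx.2.le⟩
    have h1 : 𝓝[>] x ≤ 𝓝[S] x :=
      nhdsWithin_le_of_mem (mem_of_superset (hIocmem x hx) (hmemS x hx))
    exact ((hderiv i x hxS).continuousWithinAt.tendsto).mono_left h1
  have htends : ∀ i, ∀ x ∈ Ico 0 t0, Tendsto (slope (f i) x) (𝓝[>] x) (𝓝 (f' i x)) := by
    intro i x hx
    have hxS : x ∈ S := hsub ⟨hx.1, hx.2.le⟩
    have h1 : 𝓝[>] x ≤ 𝓝[S \ {x}] x := by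
      refine nhdsWithin_le_of_mem (mem_of_superset (hIocmem x hx) ?_)
      intro t ht
      refine ⟨hmemS x hx ht, fun hteq => ?_⟩
      rw [mem_singleton_iff] at hteq
      subst hteq
      exact lt_irrefl _ ht.1
    exact (hasDerivWithinAt_iff_tendsto_slope.1 (hderiv i x hxS)).mono_left h1
  have hslope : ∀ x ∈ Ico 0 t0, ∀ r, h' x < r → ∃ᶠ z in 𝓝[>] x, slope h x z < r := by
    intro x hx r hr
    have hr0 : 0 < r := lt_of_le_of_lt (le_max_right _ _) hr
    have hsupr : ∀ i ∈ Finset.univ.filter fun i => f i x = F x, f' i x < r :=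
      fun i hi => lt_of_le_of_lt
        ((Finset.le_sup' (fun j => f' j x) hi).trans (le_max_left _ _)) hr
    have hev1 : ∀ᶠ z in 𝓝[>] x, ∀ i ∈ Finset.univ.filter fun i => f i x = F x,
        slope (f i) x z < r := by
      rw [eventually_all_finset]
      intro i hi
      exact (htends i x hx).eventually_lt_const (hsupr i hi)
    have hev2 : ∀ᶠ z in 𝓝[>] x, ∀ i ∈ Finset.univ \ (Finset.univ.filter fun i => f i x = F x),
        f i z < F x := by
      rw [eventually_all_finset]
      intro i hi
      have hlt : f i x < F x := by
        rcases (hfleF i x).lt_or_eq with h1 | h1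
        · exact h1
        · exact absurd (Finset.mem_filter.2 ⟨Finset.mem_univ i, h1⟩)
            (Finset.mem_sdiff.1 hi).2
      exact (htendf i x hx).eventually_lt_const hlt
    have hev3 : ∀ᶠ z in 𝓝[>] x, x < z := eventually_mem_nhdsWithin
    refine ((hev1.and (hev2.and hev3)).mono ?_).frequently
    rintro z ⟨h1, h2, h3⟩
    have hhz : h z = max (F z) 0 := rfl
    have hhx : h x = max (F x) 0 := rfl
    have hhx0 : 0 ≤ h x := le_max_right _ _
    have hxF : F x ≤ h x := le_max_left _ _
    rcases le_or_gt (h z) (h x) with hzx | hzx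
    · have hsl : slope h x z ≤ 0 := by
        rw [slope_def_field]
        apply div_nonpos_of_nonpos_of_nonneg (by linarith) (by linarith)
      linarith
    · have hFz : h z = F z := by
        rcases le_or_gt (F z) 0 with h4 | h4
        · exfalso
          have h5 : h z = 0 := max_eq_right h4
          linarith
        · rw [hhz, max_eq_left h4.le]
      obtain ⟨j, hjmem, hj⟩ := Finset.exists_mem_eq_sup' une fun i => f i z
      have hjz : F z = f j z := hj
      have hjA : j ∈ Finset.univ.filter fun i => f i x = F x := by
        by_contra hc
        have h6 := h2 j (Finset.mem_sdiff.2 ⟨Finset.mem_univ j, hc⟩)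
        linarith
      have hjx : f j x = F x := (Finset.mem_filter.1 hjA).2
      have hnum : h z - h x ≤ f j z - f j x := by linarith
      have hsl : slope h x z ≤ slope (f j) x z := by
        rw [slope_def_field, slope_def_field,
          div_le_div_iff_of_pos_right (sub_pos.2 h3)]
        exact hnum
      exact lt_of_le_of_lt hsl (h1 j hjA)
  have main : ∀ t ∈ Icc 0 t0, ∀ ε : ℝ, 0 < ε → h t ≤ ε * Real.exp (K * t) := by
    intro t ht ε hε
    have hB : ∀ x : ℝ,
        HasDerivAt (fun y => ε * Real.exp (K * y)) (ε * (Real.exp (K * x) * K)) x := by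
      intro x
      have h1 : HasDerivAt (fun y : ℝ => K * y) K x := by
        simpa using (hasDerivAt_id x).const_mul K
      exact ((Real.hasDerivAt_exp (K * x)).comp x h1).const_mul ε
    have h0 : h 0 ≤ ε * Real.exp (K * 0) := by
      have hF0 : F 0 ≤ 0 := Finset.sup'_le _ _ fun i _ => hinit i
      have h1 : h 0 ≤ 0 := max_le hF0 le_rfl
      have h2 : 0 < ε * Real.exp (K * 0) := by positivity
      linarith
    have bound : ∀ x ∈ Ico 0 t0, h x = ε * Real.exp (K * x) →
        h' x < ε * (Real.exp (K * x) * K) := by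
      intro x hx hcontact
      have hxS : x ∈ S := hsub ⟨hx.1, hx.2.le⟩
      have hBpos : 0 < ε * Real.exp (K * x) := by positivity
      have hFx : F x = ε * Real.exp (K * x) := by
        rcases le_or_gt (F x) 0 with h4 | h4
        · exfalso
          have h5 : h x = 0 := max_eq_right h4
          rw [h5] at hcontact
          linarith
        · rw [← hcontact]
          exact (max_eq_left h4.le).symm
      have hFpos : 0 < F x := hFx ▸ hBpos
      have hsup : ∀ i ∈ Finset.univ.filter (fun i => f i x = F x), f' i x ≤ L * F x := by
        intro i hi
        have hix : f i x = F x := (Finset.mem_filter.1 hi).2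
        have hsumle : (∑ j, a i j x * (f j x - f i x)) ≤ 0 :=
          Finset.sum_nonpos fun j _ =>
            mul_nonpos_of_nonneg_of_nonpos (hanonneg i j x hxS)
              (by linarith [hfleF j x])
        have hΦle : Φ i (f i x) ≤ L * F x := by
          have h5 : |f i x| ≤ M := hMle i x ⟨hx.1, hx.2.le⟩
          have h6 : |Φ i (f i x)| ≤ Lv i * |f i x| := hLv i _ h5
          have h7 : |f i x| = F x := by rw [hix]; exact abs_of_pos hFpos
          calc Φ i (f i x) ≤ |Φ i (f i x)| := le_abs_self _
            _ ≤ Lv i * |f i x| := h6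
            _ = Lv i * F x := by rw [h7]
            _ ≤ L * F x := mul_le_mul_of_nonneg_right (hLle i) hFpos.le
        linarith [hineq i x hxS]
      have hsup' : h' x ≤ L * F x := by
        have h8 : ((Finset.univ.filter fun i => f i x = F x).sup' (hA x) fun i => f' i x)
            ≤ L * F x := Finset.sup'_le _ _ hsup
        exact max_le h8 (mul_nonneg hLnn hFpos.le)
      calc h' x ≤ L * F x := hsup'
        _ < K * F x := by nlinarith
        _ = ε * (Real.exp (K * x) * K) := by rw [hFx]; ring
    exact image_le_of_liminf_slope_right_lt_deriv_boundary hhc hslope h0 hB bound ht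
  intro i t ht
  have hht : h t ≤ 0 := by
    have hexp : 0 < Real.exp (K * t) := Real.exp_pos _
    have h9 : ∀ c : ℝ, 0 < c → h t ≤ 0 + c := by
      intro c hc
      have h10 := main t ht (c / Real.exp (K * t)) (by positivity)
      rw [div_mul_cancel₀ _ (ne_of_gt hexp)] at h10
      linarith
    exact le_of_forall_pos_le_add h9
  exact (hfleF i t).trans ((le_max_left _ _).trans hht)

/-- Sign-preservation principle for finite families of coupled ODE differential
inequalities: with locally Lipschitz reaction terms `Φ i` vanishing at `0`,
initial sign conditions are preserved. -/
theorem stmt_2 {V : Type*} [Fintype V] [Nonempty V]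
    (T : EReal) (hT : 0 < T)
    (f f' : V → ℝ → ℝ)
    (a : V → V → ℝ → ℝ) (Φ : V → ℝ → ℝ)
    (S : Set ℝ) (hS : S = {t : ℝ | 0 ≤ t ∧ (t : EReal) < T})
    (hderiv : ∀ i, ∀ t ∈ S, HasDerivWithinAt (f i) (f' i t) S t)
    (hacont : ∀ i j, ContinuousOn (a i j) S)
    (hanonneg : ∀ i j, ∀ t ∈ S, 0 ≤ a i j t)
    (hΦ : ∀ i, LocallyLipschitz (Φ i))
    (hΦ0 : ∀ i, Φ i 0 = 0) :
    ((∀ i, ∀ t ∈ S, f' i t ≥ (∑ j, a i j t * (f j t - f i t)) + Φ i (f i t)) →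
      (∀ i, f i 0 ≥ 0) → ∀ i, ∀ t ∈ S, f i t ≥ 0) ∧
    ((∀ i, ∀ t ∈ S, f' i t ≤ (∑ j, a i j t * (f j t - f i t)) + Φ i (f i t)) →
      (∀ i, f i 0 ≤ 0) → ∀ i, ∀ t ∈ S, f i t ≤ 0) := by
  have hsubIcc : ∀ t ∈ S, Icc 0 t ⊆ S := by
    intro t ht s hs
    rw [hS] at ht ⊢
    refine ⟨hs.1, lt_of_le_of_lt ?_ ht.2⟩
    exact_mod_cast EReal.coe_le_coe_iff.2 hs.2
  have hneg : LocallyLipschitz (fun y : ℝ => -y) := by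
    refine LipschitzWith.locallyLipschitz (K := 1) ?_
    exact LipschitzWith.of_dist_le_mul fun x y => by
      rw [dist_neg_neg]; simp
  constructor
  · intro hineq hinit i t ht
    rcases eq_or_lt_of_le (by rw [hS] at ht; exact ht.1) with h0 | h0
    · rw [← h0]; exact hinit i
    · have hkey := key S (fun i t => -(f i t)) (fun i t => -(f' i t)) a
        (fun i y => -(Φ i (-y)))
        (fun i s hs => (hderiv i s hs).neg)
        hanonneg
        (fun i => (hneg.comp (hΦ i)).comp hneg)
        (fun i => by simp [hΦ0 i])
        (fun i s hs => by
          have h1 := hineq i s hs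
          have h2 : ∑ j, a i j s * (-(f j s) - -(f i s))
              = -∑ j, a i j s * (f j s - f i s) := by
            rw [← Finset.sum_neg_distrib]
            exact Finset.sum_congr rfl fun j _ => by ring
          rw [h2]
          simp only [neg_neg]
          linarith)
        (fun i => neg_nonpos.2 (hinit i))
        t h0 (hsubIcc t ht) i t ⟨h0.le, le_rfl⟩
      have hkey' : -f i t ≤ 0 := hkey
      linarith
  · intro hineq hinit i t ht
    rcases eq_or_lt_of_le (by rw [hS] at ht; exact ht.1) with h0 | h0
    · rw [← h0]; exact hinit i
    · exact key S f f' a Φ hderiv hanonneg hΦ hΦ0 hineq hinit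
        t h0 (hsubIcc t ht) i t ⟨h0.le, le_rfl⟩
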